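/- Let N be a finite ground set with |N| = n, let f : Finset N → ℝ be a nonnegative, monotone increasing, submodular set function with f(∅) = 0, and let 1 ≤ k ≤ n. The lazier-than-lazy greedy algorithm with sample size s = 1 (i.e., at each of the k rounds a single element is sampled uniformly at random from the remaining elements and added to the current set) achieves E[f(S_k)] ≥ (1 − 1/e − e^{−k/n}) · max{ f(S) : S ⊆ N, |S| ≤ k }. -/

import Mathlib

open scoped BigOperators


private lemma Ex_bind' {α : Type*} [Fintype α] (p : PMF α) (q : α → PMF α) (g : α → ℝ) :
    ∑ b, ((p.bind q) b).toReal * g b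
      = ∑ a, (p a).toReal * ∑ b, ((q a) b).toReal * g b := by
  have h : ∀ b, ((p.bind q) b).toReal = ∑ a, (p a).toReal * ((q a) b).toReal := by
    intro b
    rw [PMF.bind_apply, tsum_fintype, ENNReal.toReal_sum
      (fun a _ => ENNReal.mul_ne_top (PMF.apply_ne_top p a) (PMF.apply_ne_top (q a) b))]
    exact Finset.sum_congr rfl fun a _ => ENNReal.toReal_mul
  simp_rw [h, Finset.sum_mul, Finset.mul_sum]
  rw [Finset.sum_comm]
  exact Finset.sum_congr rfl fun a _ => Finset.sum_congr rfl fun b _ => by ring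

private lemma Ex_pure' {α : Type*} [Fintype α] [DecidableEq α] (x : α) (g : α → ℝ) :
    ∑ b, ((PMF.pure x) b).toReal * g b = g x := by
  simp [PMF.pure_apply, apply_ite ENNReal.toReal, ite_mul, Finset.sum_ite_eq']

private lemma Ex_uniform' {α : Type*} [Fintype α] [DecidableEq α]
    (s : Finset α) (hs : s.Nonempty) (g : α → ℝ) :
    ∑ b, ((PMF.uniformOfFinset s hs) b).toReal * g b = (s.card : ℝ)⁻¹ * ∑ x ∈ s, g x := by
  rw [Finset.mul_sum]
  rw [← Finset.sum_filter_add_sum_filter_not Finset.univ (fun b => b ∈ s)]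
  have hz : ∑ b ∈ Finset.univ.filter (fun b => ¬ b ∈ s),
      ((PMF.uniformOfFinset s hs) b).toReal * g b = 0 := by
    apply Finset.sum_eq_zero
    intro b hb
    rw [Finset.mem_filter] at hb
    simp [PMF.uniformOfFinset_apply, hb.2]
  rw [hz, add_zero, Finset.filter_mem_eq_inter, Finset.univ_inter]
  apply Finset.sum_congr rfl
  intro b hb
  simp [PMF.uniformOfFinset_apply, hb, ENNReal.toReal_inv]

private lemma sum_toReal_eq_one {α : Type*} [Fintype α] (p : PMF α) :
    ∑ a, (p a).toReal = 1 := by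
  have := p.tsum_coe
  rw [tsum_fintype] at this
  have := congrArg ENNReal.toReal this
  rwa [ENNReal.toReal_sum (fun a _ => PMF.apply_ne_top p a), ENNReal.toReal_one] at this

private lemma marg_sum {N : Type*} [Fintype N] [DecidableEq N]
    (f : Finset N → ℝ)
    (hsubmod : ∀ S T : Finset N, S ⊆ T → ∀ x ∉ T,
      f (insert x T) - f T ≤ f (insert x S) - f S)
    (T : Finset N) :
    ∀ (A : Finset N), (∀ a ∈ A, a ∉ T) →
      f (T ∪ A) - f T ≤ ∑ x ∈ A, (f (insert x T) - f T) := by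
  intro A
  induction A using Finset.induction_on with
  | empty => simp
  | @insert a s ha ih =>
    intro hA
    have haT : a ∉ T := hA a (Finset.mem_insert_self a s)
    have haTs : a ∉ T ∪ s := by
      simp only [Finset.mem_union]
      push_neg
      exact ⟨haT, ha⟩
    have h1 := hsubmod T (T ∪ s) Finset.subset_union_left a haTs
    have h2 := ih (fun x hx => hA x (Finset.mem_insert_of_mem hx))
    rw [Finset.union_insert, Finset.sum_insert ha]
    linarith


/-- Lazier-than-lazy greedy with sample size `s = 1` (pure random sampling):
for a nonnegative, normalized, monotone increasing, submodular `f` on a ground set of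
size `n` and cardinality budget `1 ≤ k ≤ n`, the process that at each of the `k`
rounds samples a single element uniformly at random from the remaining elements and
adds it to the current set satisfies
`E[f(S_k)] ≥ (1 − 1/e − e^{−k/n}) · max_{|S| ≤ k} f(S)`. -/
theorem lazier_greedy_sample_one_expected_guarantee
    {N : Type*} [Fintype N] [DecidableEq N]
    (f : Finset N → ℝ)
    (hnonneg : ∀ S : Finset N, 0 ≤ f S)
    (hmono : ∀ S T : Finset N, S ⊆ T → f S ≤ f T)
    (hsubmod : ∀ S T : Finset N, S ⊆ T → ∀ x ∉ T,
      f (insert x T) - f T ≤ f (insert x S) - f S)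
    (hnorm : f ∅ = 0)
    (n k : ℕ) (hn : n = Fintype.card N) (hk1 : 1 ≤ k) (hkn : k ≤ n)
    -- the random process: `proc i` is the law of `Sᵢ`; at each round a single
    -- element is sampled uniformly from the remaining elements and added
    (proc : ℕ → PMF (Finset N))
    (hproc0 : proc 0 = PMF.pure ∅)
    (hprocSucc : ∀ i, proc (i + 1) = (proc i).bind (fun T =>
      (PMF.uniformOfFinset
          (Finset.powersetCard (min 1 (Finset.univ \ T).card) (Finset.univ \ T))
          (Finset.powersetCard_nonempty.mpr (min_le_right _ _))).bind
        (fun R => PMF.pure (if h : R.Nonempty then insert h.choose T else T)))) :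
    (1 - 1 / Real.exp 1 - Real.exp (-((k : ℝ) / (n : ℝ)))) *
        ((Finset.univ.powerset.filter (fun T : Finset N => T.card ≤ k)).sup'
          ⟨∅, by simp⟩ f)
      ≤ ∑ T : Finset N, ((proc k) T).toReal * f T := by
  have hn1 : 1 ≤ n := le_trans hk1 hkn
  have hnpos : (0:ℝ) < n := by exact_mod_cast hn1
  set OPT : ℝ := (Finset.univ.powerset.filter (fun T : Finset N => T.card ≤ k)).sup'
      ⟨∅, by simp⟩ f with hOPT
  obtain ⟨Sstar, hSmem, hSeq⟩ := Finset.exists_mem_eq_sup'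
      (⟨∅, by simp⟩ : (Finset.univ.powerset.filter (fun T : Finset N => T.card ≤ k)).Nonempty) f
  have hOPTval : OPT = f Sstar := hSeq
  have hOPT0 : 0 ≤ OPT := by rw [hOPTval]; exact hnonneg Sstar
  -- one-step expectation bound
  have hstep : ∀ T : Finset N,
      (1 - 1/(n:ℝ)) * f T + OPT / n ≤
      ∑ b, (((PMF.uniformOfFinset
          (Finset.powersetCard (min 1 (Finset.univ \ T).card) (Finset.univ \ T))
          (Finset.powersetCard_nonempty.mpr (min_le_right _ _))).bind
        (fun R => PMF.pure (if h : R.Nonempty then insert h.choose T else T))) b).toReal * f b := by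
    intro T
    rw [Ex_bind']
    simp_rw [Ex_pure']
    rw [Ex_uniform']
    set s : Finset N := Finset.univ \ T with hs
    have hsub : ∀ x ∈ s, x ∉ T := by
      intro x hx
      exact (Finset.mem_sdiff.mp hx).2
    rcases eq_or_ne s.card 0 with hcard | hcard
    · -- T = univ
      have hse : s = ∅ := Finset.card_eq_zero.mp hcard
      have hTu : T = Finset.univ :=
        Finset.univ_subset_iff.mp (Finset.sdiff_eq_empty_iff_subset.mp hse)
      have hOPTle : OPT ≤ f T := by
        rw [hOPTval, hTu]; exact hmono _ _ (Finset.subset_univ _)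
      have hP : Finset.powersetCard (min 1 s.card) s = {∅} := by
        rw [hcard, hse]; simp
      rw [hP]
      have hval : ((({∅} : Finset (Finset N)).card : ℝ))⁻¹
          * ∑ R ∈ ({∅} : Finset (Finset N)), f (if h : R.Nonempty then insert h.choose T else T)
          = f T := by simp
      rw [hval]
      have h1 : (1 - 1/(n:ℝ)) * f T + OPT / n = f T + (OPT - f T)/n := by ring
      rw [h1]
      have : (OPT - f T)/n ≤ 0 := div_nonpos_of_nonpos_of_nonneg (by linarith) (le_of_lt hnpos)
      linarith
    · -- s nonempty
      have hm1 : 1 ≤ s.card := Nat.one_le_iff_ne_zero.mpr hcard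
      have hmin : min 1 s.card = 1 := min_eq_left hm1
      have hP : Finset.powersetCard (min 1 s.card) s
          = Finset.map ⟨singleton, Finset.singleton_injective⟩ s := by
        rw [hmin, Finset.powersetCard_one]
      rw [hP, Finset.card_map, Finset.sum_map]
      have hg : ∀ x : N, f (if h : (({x} : Finset N)).Nonempty then insert h.choose T else T)
          = f (insert x T) := by
        intro x
        have hne : (({x} : Finset N)).Nonempty := ⟨x, Finset.mem_singleton_self x⟩
        rw [dif_pos hne]
        have : hne.choose = x := Finset.mem_singleton.mp hne.choose_spec
        rw [this]
      simp only [Function.Embedding.coeFn_mk]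
      simp_rw [hg]
      -- now: goal  ≤ (s.card)⁻¹ * ∑ x ∈ s, f (insert x T)
      have hmn : (s.card : ℝ) ≤ n := by
        have : s.card ≤ Fintype.card N := by
          simpa using Finset.card_le_univ s
        rw [hn]
        exact_mod_cast this
      have hmpos : (0:ℝ) < s.card := by exact_mod_cast hm1
      have hdiff : ∀ x ∈ s, 0 ≤ f (insert x T) - f T := by
        intro x hx
        have := hmono T (insert x T) (Finset.subset_insert x T)
        linarith
      have hkey : OPT - f T ≤ ∑ x ∈ s, (f (insert x T) - f T) := by
        have h1 : f (T ∪ (Sstar \ T)) - f T ≤ ∑ x ∈ Sstar \ T, (f (insert x T) - f T) :=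
          marg_sum f hsubmod T (Sstar \ T) (fun a ha => (Finset.mem_sdiff.mp ha).2)
        have h2 : f Sstar ≤ f (T ∪ (Sstar \ T)) := by
          rw [Finset.union_sdiff_self_eq_union]
          exact hmono _ _ Finset.subset_union_right
        have h3 : ∑ x ∈ Sstar \ T, (f (insert x T) - f T)
            ≤ ∑ x ∈ s, (f (insert x T) - f T) := by
          apply Finset.sum_le_sum_of_subset_of_nonneg
          · intro x hx
            rw [Finset.mem_sdiff] at hx ⊢
            exact ⟨Finset.mem_univ x, hx.2⟩
          · intro x hx _
            exact hdiff x hx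
        rw [hOPTval]
        linarith
      have hsumnn : 0 ≤ ∑ x ∈ s, (f (insert x T) - f T) := Finset.sum_nonneg hdiff
      have hsumrw : ∑ x ∈ s, f (insert x T)
          = (∑ x ∈ s, (f (insert x T) - f T)) + s.card * f T := by
        rw [Finset.sum_sub_distrib]
        simp [Finset.sum_const, nsmul_eq_mul]
      rw [hsumrw]
      set D := ∑ x ∈ s, (f (insert x T) - f T) with hD
      have hstep1 : (↑s.card)⁻¹ * (D + ↑s.card * f T) = f T + (↑s.card)⁻¹ * D := by
        field_simp
        ring
      rw [hstep1]
      have h4 : (n:ℝ)⁻¹ * D ≤ (↑s.card)⁻¹ * D := by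
        apply mul_le_mul_of_nonneg_right _ hsumnn
        exact inv_anti₀ hmpos hmn
      have h5 : (n:ℝ)⁻¹ * (OPT - f T) ≤ (n:ℝ)⁻¹ * D :=
        mul_le_mul_of_nonneg_left hkey (inv_nonneg.mpr (le_of_lt hnpos))
      have h6 : (1 - 1/(n:ℝ)) * f T + OPT / n = f T + (n:ℝ)⁻¹ * (OPT - f T) := by
        field_simp
        ring
      rw [h6]
      linarith
  -- induction on rounds
  have hind : ∀ i : ℕ, (1 - (1 - 1/(n:ℝ))^i) * OPT ≤ ∑ T : Finset N, ((proc i) T).toReal * f T := by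
    intro i
    induction i with
    | zero =>
      rw [hproc0, Ex_pure', hnorm]
      simp
    | succ i ih =>
      rw [hprocSucc i, Ex_bind']
      have hlow : ∀ T : Finset N, (0:ℝ) ≤ ((proc i) T).toReal := fun T => ENNReal.toReal_nonneg
      have h1 : ∑ T : Finset N, ((proc i) T).toReal * ((1 - 1/(n:ℝ)) * f T + OPT / n)
          ≤ ∑ T : Finset N, ((proc i) T).toReal * ∑ b, (((PMF.uniformOfFinset
              (Finset.powersetCard (min 1 (Finset.univ \ T).card) (Finset.univ \ T))
              (Finset.powersetCard_nonempty.mpr (min_le_right _ _))).bind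
            (fun R => PMF.pure (if h : R.Nonempty then insert h.choose T else T))) b).toReal * f b := by
        apply Finset.sum_le_sum
        intro T _
        exact mul_le_mul_of_nonneg_left (hstep T) (hlow T)
      refine le_trans ?_ h1
      have h2 : ∑ T : Finset N, ((proc i) T).toReal * ((1 - 1/(n:ℝ)) * f T + OPT / n)
          = (1 - 1/(n:ℝ)) * (∑ T : Finset N, ((proc i) T).toReal * f T)
            + (OPT / n) * ∑ T : Finset N, ((proc i) T).toReal := by
        rw [Finset.mul_sum, Finset.mul_sum, ← Finset.sum_add_distrib]
        apply Finset.sum_congr rfl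
        intro T _
        ring
      rw [h2, sum_toReal_eq_one, mul_one]
      have hq0 : (0:ℝ) ≤ 1 - 1/(n:ℝ) := by
        rw [sub_nonneg]
        rw [div_le_one hnpos]
        exact_mod_cast hn1
      have hmul := mul_le_mul_of_nonneg_left ih hq0
      have hps : (1 - 1/(n:ℝ))^(i+1) = (1 - 1/(n:ℝ))^i * (1 - 1/(n:ℝ)) := pow_succ _ _
      rw [hps]
      have key : (1 - (1 - 1/(n:ℝ))^i * (1 - 1/(n:ℝ))) * OPT
          = (1 - 1/(n:ℝ)) * ((1 - (1 - 1/(n:ℝ))^i) * OPT) + OPT / n := by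
        field_simp
        ring
      rw [key]
      linarith [hmul]
  have hfinal := hind k
  refine le_trans ?_ hfinal
  apply mul_le_mul_of_nonneg_right _ hOPT0
  -- 1 - 1/e - exp(-k/n) ≤ 1 - (1-1/n)^k
  have hq0 : (0:ℝ) ≤ 1 - 1/(n:ℝ) := by
    rw [sub_nonneg, div_le_one hnpos]
    exact_mod_cast hn1
  have hqle : (1 - 1/(n:ℝ)) ≤ Real.exp (-(1/(n:ℝ))) := by
    have := Real.add_one_le_exp (-(1/(n:ℝ)))
    linarith
  have hpow : (1 - 1/(n:ℝ))^k ≤ Real.exp (-(1/(n:ℝ)))^k :=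
    pow_le_pow_left₀ hq0 hqle k
  have hexp : Real.exp (-(1/(n:ℝ)))^k = Real.exp (-((k:ℝ)/(n:ℝ))) := by
    rw [← Real.exp_nat_mul]
    congr 1
    ring
  rw [hexp] at hpow
  have hepos : 0 < 1 / Real.exp 1 := by positivity
  linarith
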